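/- Let γ > 0 and let X_0, …, X_K ∈ ℝ^{N_i × d} and Y_i ∈ ℝ^{N_i × d_{y_i}} be the phase-wise activation and label matrices. Define sequences recursively by R̂_0 = (X_0ᵀ X_0 + γI)⁻¹, Ŵ_0 = R̂_0 X_0ᵀ Y_0, and for k ≥ 1: R̂_k = R̂_{k-1} − R̂_{k-1} X_kᵀ (I + X_k R̂_{k-1} X_kᵀ)⁻¹ X_k R̂_{k-1} and Ŵ_k = Ŵ'_{k-1} + R̂_k X_kᵀ ([0 Y_k] − X_k Ŵ'_{k-1}), where Ŵ'_{k-1} = [Ŵ_{k-1} 0] is Ŵ_{k-1} zero-padded on the right with d_{y_k} zero columns and [0 Y_k] is Y_k zero-padded on the left with d_{y_0}+…+d_{y_{k-1}} zero columns. Then for every k = 0, 1, …, K: R̂_k = (X_{0:k}ᵀ X_{0:k} + γI)⁻¹ and Ŵ_k = R̂_k X_{0:k}ᵀ Y_{0:k}, where X_{0:k} is the row-wise concatenation of X_0, …, X_k and Y_{0:k} is the block matrix with Y_i in the (i-th row block, i-th column block) position and zeros elsewhere. Hence the incrementally trained weight equals the weight obtained by joint training on all data of phases 0 through k. -/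

import Mathlib

open Matrix

/-- Row-wise concatenation `X_{0:k}` of phase-wise activation matrices `X_0, …, X_k`. -/
def concatRows {d : ℕ} (N : ℕ → ℕ)
    (X : ∀ i : ℕ, Matrix (Fin (N i)) (Fin d) ℝ) (k : ℕ) :
    Matrix ((i : Fin (k + 1)) × Fin (N i)) (Fin d) ℝ :=
  fun p j => X p.1 p.2 j

/-- Block matrix `Y_{0:k}` whose `(i,i)`-th block is the phase-`i` label matrix `Y_i`
and whose off-(block-)diagonal blocks vanish. -/
def blockDiagLabels (N dy : ℕ → ℕ)
    (Y : ∀ i : ℕ, Matrix (Fin (N i)) (Fin (dy i)) ℝ) (k : ℕ) :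
    Matrix ((i : Fin (k + 1)) × Fin (N i)) ((i : Fin (k + 1)) × Fin (dy i)) ℝ :=
  fun p q =>
    if h : (p.1 : ℕ) = (q.1 : ℕ) then
      Y p.1 p.2 (Fin.cast (congrArg dy h.symm) q.2)
    else 0

/-- `[W  0]`: a weight matrix with column blocks for phases `0, …, k-1`, zero-padded on the
right with the `d_{y_k}` zero columns of the new phase `k`. -/
def padColsRight {d : ℕ} (dy : ℕ → ℕ) (k : ℕ)
    (W : Matrix (Fin d) ((i : Fin k) × Fin (dy i)) ℝ) :
    Matrix (Fin d) ((i : Fin (k + 1)) × Fin (dy i)) ℝ :=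
  fun r q => if h : (q.1 : ℕ) < k then W r ⟨⟨q.1, h⟩, q.2⟩ else 0

/-- `[0  Y_k]`: the phase-`k` label matrix zero-padded on the left with the column blocks of
all previous phases. -/
def padColsLeft {n : ℕ} (dy : ℕ → ℕ) (k : ℕ)
    (Yk : Matrix (Fin n) (Fin (dy k)) ℝ) :
    Matrix (Fin n) ((i : Fin (k + 1)) × Fin (dy i)) ℝ :=
  fun r q => if h : (q.1 : ℕ) = k then Yk r (Fin.cast (congrArg dy h) q.2) else 0

/-- The recursively updated inverted auto-correlation matrix:
`R̂_0 = (X_0ᵀ X_0 + γI)⁻¹` and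
`R̂_k = R̂_{k−1} − R̂_{k−1} X_kᵀ (I + X_k R̂_{k−1} X_kᵀ)⁻¹ X_k R̂_{k−1}`. -/
noncomputable def Rhat {d : ℕ} (γ : ℝ) (N : ℕ → ℕ)
    (X : ∀ i : ℕ, Matrix (Fin (N i)) (Fin d) ℝ) : ℕ → Matrix (Fin d) (Fin d) ℝ
  | 0 => ((X 0)ᵀ * X 0 + γ • (1 : Matrix (Fin d) (Fin d) ℝ))⁻¹
  | k + 1 =>
      Rhat γ N X k -
        Rhat γ N X k * (X (k + 1))ᵀ *
          ((1 : Matrix (Fin (N (k + 1))) (Fin (N (k + 1))) ℝ) +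
              X (k + 1) * Rhat γ N X k * (X (k + 1))ᵀ)⁻¹ *
          X (k + 1) * Rhat γ N X k

/-- The recursively updated (concatenated) weight matrix:
`Ŵ_0 = R̂_0 X_0ᵀ Y_0` and
`Ŵ_k = [Ŵ_{k−1} 0] + R̂_k X_kᵀ ([0 Y_k] − X_k [Ŵ_{k−1} 0])`. -/
noncomputable def What {d : ℕ} (γ : ℝ) (N dy : ℕ → ℕ)
    (X : ∀ i : ℕ, Matrix (Fin (N i)) (Fin d) ℝ)
    (Y : ∀ i : ℕ, Matrix (Fin (N i)) (Fin (dy i)) ℝ) :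
    (k : ℕ) → Matrix (Fin d) ((i : Fin (k + 1)) × Fin (dy i)) ℝ
  | 0 => fun r q =>
      (Rhat γ N X 0 * (X 0)ᵀ * Y 0) r
        (Fin.cast (congrArg dy (Nat.lt_one_iff.mp q.1.isLt)) q.2)
  | k + 1 =>
      padColsRight dy (k + 1) (What γ N dy X Y k) +
        Rhat γ N X (k + 1) * (X (k + 1))ᵀ *
          (padColsLeft dy (k + 1) (Y (k + 1)) -
            X (k + 1) * padColsRight dy (k + 1) (What γ N dy X Y k))


section aux
variable {d : ℕ} (N dy : ℕ → ℕ)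
  (X : ∀ i : ℕ, Matrix (Fin (N i)) (Fin d) ℝ)
  (Y : ∀ i : ℕ, Matrix (Fin (N i)) (Fin (dy i)) ℝ)

lemma gram_zero : (concatRows N X 0)ᵀ * concatRows N X 0 = (X 0)ᵀ * X 0 := by
  ext r c
  simp only [mul_apply, transpose_apply, concatRows]
  rw [← Finset.univ_sigma_univ, Finset.sum_sigma, Fin.sum_univ_one]
  rfl

lemma gram_succ (k : ℕ) :
    (concatRows N X (k + 1))ᵀ * concatRows N X (k + 1) =
      (concatRows N X k)ᵀ * concatRows N X k + (X (k + 1))ᵀ * X (k + 1) := by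
  ext r c
  simp only [mul_apply, transpose_apply, Matrix.add_apply, concatRows]
  rw [← Finset.univ_sigma_univ, Finset.sum_sigma, Fin.sum_univ_castSucc,
    ← Finset.univ_sigma_univ, Finset.sum_sigma]
  rfl
end aux

section aux2
variable {d : ℕ} (N dy : ℕ → ℕ)
  (X : ∀ i : ℕ, Matrix (Fin (N i)) (Fin d) ℝ)
  (Y : ∀ i : ℕ, Matrix (Fin (N i)) (Fin (dy i)) ℝ)

lemma B_apply (k : ℕ) (r : Fin d) (q : (i : Fin (k + 1)) × Fin (dy i)) :
    ((concatRows N X k)ᵀ * blockDiagLabels N dy Y k) r q =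
      ((X (q.1 : ℕ))ᵀ * Y (q.1 : ℕ)) r q.2 := by
  simp only [mul_apply, transpose_apply, concatRows, blockDiagLabels]
  rw [← Finset.univ_sigma_univ, Finset.sum_sigma]
  rw [Fintype.sum_eq_single q.1]
  · simp
  · intro b hb
    have hb' : (b : ℕ) ≠ (q.1 : ℕ) := fun h => hb (Fin.ext h)
    simp [hb']

lemma mul_padColsRight {e : ℕ} (k : ℕ) (M : Matrix (Fin e) (Fin d) ℝ)
    (W : Matrix (Fin d) ((i : Fin k) × Fin (dy i)) ℝ) :
    M * padColsRight dy k W = padColsRight dy k (M * W) := by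
  ext r q
  by_cases h : (q.1 : ℕ) < k <;>
    simp [padColsRight, mul_apply, h]

lemma mul_padColsLeft {e n : ℕ} (k : ℕ) (M : Matrix (Fin e) (Fin n) ℝ)
    (Yk : Matrix (Fin n) (Fin (dy k)) ℝ) :
    M * padColsLeft dy k Yk = padColsLeft dy k (M * Yk) := by
  ext r q
  by_cases h : (q.1 : ℕ) = k <;>
    simp [padColsLeft, mul_apply, h]

lemma B_succ (k : ℕ) :
    (concatRows N X (k + 1))ᵀ * blockDiagLabels N dy Y (k + 1) =
      padColsRight dy (k + 1) ((concatRows N X k)ᵀ * blockDiagLabels N dy Y k) +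
        (X (k + 1))ᵀ * padColsLeft dy (k + 1) (Y (k + 1)) := by
  rw [mul_padColsLeft]
  ext r q
  obtain ⟨⟨iv, hiv⟩, j⟩ := q
  rw [Matrix.add_apply, B_apply]
  rcases Nat.lt_succ_iff_lt_or_eq.mp hiv with h | h
  · have h' : ¬ (iv = k + 1) := Nat.ne_of_lt h
    simp only [padColsRight, padColsLeft]
    rw [dif_pos h, dif_neg h', add_zero, B_apply]
  · subst h
    simp only [padColsRight, padColsLeft]
    rw [dif_neg (lt_irrefl _)]
    simp [Fin.cast]

lemma A_posDef {m : Type*} [Fintype m] {γ : ℝ} (hγ : 0 < γ)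
    (M : Matrix m (Fin d) ℝ) :
    (Mᵀ * M + γ • (1 : Matrix (Fin d) (Fin d) ℝ)).PosDef := by
  have h1 : ((γ : ℝ) • (1 : Matrix (Fin d) (Fin d) ℝ)).PosDef := by
    rw [smul_one_eq_diagonal]
    exact Matrix.PosDef.diagonal fun _ => hγ
  have h2 : (Mᵀ * M).PosSemidef := by
    have := Matrix.posSemidef_conjTranspose_mul_self M
    rwa [conjTranspose_eq_transpose_of_trivial] at this
  exact Matrix.PosDef.posSemidef_add h2 h1
end aux2

/-- **Equivalence of C-RLS class-incremental learning and joint learning.**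
For `γ > 0` and phase-wise activations `X_i ∈ ℝ^{N_i×d}` and labels `Y_i ∈ ℝ^{N_i×d_{y_i}}`,
the recursively computed `R̂_k` and `Ŵ_k` coincide, for every `k = 0, 1, …, K`, with the
batch (joint-learning) quantities: `R̂_k = (X_{0:k}ᵀ X_{0:k} + γI)⁻¹` and
`Ŵ_k = R̂_k X_{0:k}ᵀ Y_{0:k}`, where `X_{0:k}` is the row-wise concatenation of
`X_0, …, X_k` and `Y_{0:k}` the block matrix with the `Y_i` on its block diagonal. -/
theorem crls_equals_joint_learning
    {d : ℕ} (γ : ℝ) (hγ : 0 < γ) (K : ℕ) (N dy : ℕ → ℕ)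
    (X : ∀ i : ℕ, Matrix (Fin (N i)) (Fin d) ℝ)
    (Y : ∀ i : ℕ, Matrix (Fin (N i)) (Fin (dy i)) ℝ) :
    ∀ k ≤ K,
      Rhat γ N X k =
        ((concatRows N X k)ᵀ * concatRows N X k + γ • (1 : Matrix (Fin d) (Fin d) ℝ))⁻¹ ∧
      What γ N dy X Y k =
        Rhat γ N X k * (concatRows N X k)ᵀ * blockDiagLabels N dy Y k := by
  intro k hk; clear hk
  induction k with
  | zero =>
    have hR : Rhat γ N X 0 =
        ((concatRows N X 0)ᵀ * concatRows N X 0 + γ • (1 : Matrix (Fin d) (Fin d) ℝ))⁻¹ := by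
      rw [gram_zero]; rfl
    refine ⟨hR, ?_⟩
    ext r q
    obtain ⟨⟨iv, hiv⟩, j⟩ := q
    have h0 : iv = 0 := Nat.lt_one_iff.mp hiv
    subst h0
    show (Rhat γ N X 0 * (X 0)ᵀ * Y 0) r j =
      (Rhat γ N X 0 * (concatRows N X 0)ᵀ * blockDiagLabels N dy Y 0) r ⟨⟨0, hiv⟩, j⟩
    rw [Matrix.mul_assoc, Matrix.mul_assoc, mul_apply, mul_apply]
    exact Finset.sum_congr rfl fun x _ => by rw [B_apply]
  | succ k ih =>
    obtain ⟨ihR, ihW⟩ := ih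
    set Ak := (concatRows N X k)ᵀ * concatRows N X k + γ • (1 : Matrix (Fin d) (Fin d) ℝ)
      with hAk
    set Ak1 := (concatRows N X (k+1))ᵀ * concatRows N X (k+1) +
      γ • (1 : Matrix (Fin d) (Fin d) ℝ) with hAk1
    have hApos : Ak.PosDef := A_posDef hγ _
    have hA1pos : Ak1.PosDef := A_posDef hγ _
    have hAdet : IsUnit Ak.det := (Matrix.isUnit_iff_isUnit_det _).mp hApos.isUnit
    have hA1det : IsUnit Ak1.det := (Matrix.isUnit_iff_isUnit_det _).mp hA1pos.isUnit
    have hAsucc : Ak1 = Ak + (X (k+1))ᵀ * X (k+1) := by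
      rw [hAk1, gram_succ, hAk, add_right_comm]
    have hSpos : ((1 : Matrix (Fin (N (k+1))) (Fin (N (k+1))) ℝ) +
        X (k+1) * Ak⁻¹ * (X (k+1))ᵀ).PosDef := by
      have hsemi : (X (k+1) * Ak⁻¹ * (X (k+1))ᵀ).PosSemidef := by
        have := (hApos.inv.posSemidef).mul_mul_conjTranspose_same (X (k+1))
        rwa [conjTranspose_eq_transpose_of_trivial] at this
      exact Matrix.PosDef.add_posSemidef Matrix.PosDef.one hsemi
    -- R step
    have hR : Rhat γ N X (k+1) = Ak1⁻¹ := by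
      have hw := Matrix.add_mul_mul_inv_eq_sub Ak ((X (k+1))ᵀ) 1 (X (k+1))
        hApos.isUnit isUnit_one (by simpa using hSpos.isUnit)
      simp only [Matrix.mul_one, inv_one] at hw
      rw [show Rhat γ N X (k+1) = Rhat γ N X k -
          Rhat γ N X k * (X (k + 1))ᵀ *
            ((1 : Matrix (Fin (N (k + 1))) (Fin (N (k + 1))) ℝ) +
                X (k + 1) * Rhat γ N X k * (X (k + 1))ᵀ)⁻¹ *
            X (k + 1) * Rhat γ N X k from rfl, ihR, hAsucc, hw]
    refine ⟨by rw [hR], ?_⟩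
    -- W step
    set Bk := (concatRows N X k)ᵀ * blockDiagLabels N dy Y k with hBk
    set Bk1 := (concatRows N X (k+1))ᵀ * blockDiagLabels N dy Y (k+1) with hBk1
    have hWk : What γ N dy X Y k = Ak⁻¹ * Bk := by
      rw [ihW, ihR, Matrix.mul_assoc, ← hBk]
    have hAWk : Ak * What γ N dy X Y k = Bk := by
      rw [hWk, ← Matrix.mul_assoc, Matrix.mul_nonsing_inv _ hAdet, Matrix.one_mul]
    set W' := padColsRight dy (k+1) (What γ N dy X Y k) with hW'
    have hkey : Ak1 * What γ N dy X Y (k+1) = Bk1 := by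
      rw [show What γ N dy X Y (k+1) = W' +
          Rhat γ N X (k + 1) * (X (k + 1))ᵀ *
            (padColsLeft dy (k + 1) (Y (k + 1)) -
              X (k + 1) * W') from rfl, hR]
      rw [Matrix.mul_add, Matrix.mul_assoc Ak1⁻¹, ← Matrix.mul_assoc Ak1,
        Matrix.mul_nonsing_inv _ hA1det, Matrix.one_mul, Matrix.mul_sub]
      have hcancel : Ak1 * W' = Ak * W' + (X (k+1))ᵀ * (X (k+1) * W') := by
        rw [hAsucc, Matrix.add_mul, Matrix.mul_assoc]
      have hAW' : Ak * W' = padColsRight dy (k+1) Bk := by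
        rw [hW', mul_padColsRight, hAWk]
      rw [hcancel, hAW', hBk1, B_succ, ← hBk]
      abel
    have hfin : What γ N dy X Y (k+1) = Ak1⁻¹ * Bk1 := by
      rw [← hkey, ← Matrix.mul_assoc, Matrix.nonsing_inv_mul _ hA1det, Matrix.one_mul]
    rw [hfin, hR, Matrix.mul_assoc, ← hBk1]
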